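/- (Final-layer total variation bound, the first step in the proof of Proposition F.1.) Let τ ∈ (0,1], L ≥ 1, and let X, X̃ ∈ ℝ^{L×d} satisfy ‖Xᵀ‖_{2,∞} ≤ 1 and ‖X̃ᵀ‖_{2,∞} ≤ 1 (every row has Euclidean norm at most 1). Let A, Ã ∈ ℝ^{d×d_y}, and define the output distributions P = softmax( (1/(Lτ)) 𝟙_Lᵀ X A ) and P̃ = softmax( (1/(Lτ)) 𝟙_Lᵀ X̃ Ã ) in ℝ^{d_y}, where 𝟙_L ∈ ℝ^L is the all-ones vector. Then TV(P, P̃) := (1/2)‖P − P̃‖₁ ≤ (2/τ) [ ‖Aᵀ‖_{1,2} · ‖Xᵀ − X̃ᵀ‖_{2,∞} + ‖Aᵀ − Ãᵀ‖_{1,2} ], where ‖Mᵀ‖_{1,2} = (Σ_i ‖M_{i,:}‖₁²)^{1/2} for M with rows M_{i,:}, and ‖Mᵀ‖_{2,∞} = max_i ‖M_{i,:}‖₂. -/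

import Mathlib

open Finset

private lemma cs_abs {n : ℕ} (f g : Fin n → ℝ) :
    |∑ i, f i * g i| ≤ Real.sqrt (∑ i, f i ^ 2) * Real.sqrt (∑ i, g i ^ 2) := by
  rw [← Real.sqrt_sq_eq_abs, ← Real.sqrt_mul (by positivity)]
  exact Real.sqrt_le_sqrt (Finset.sum_mul_sq_le_sq_mul_sq _ _ _)


/-- The softmax of a vector `u ∈ ℝⁿ`. -/
noncomputable def softmaxVec {n : ℕ} (u : Fin n → ℝ) : Fin n → ℝ :=
  fun i => Real.exp (u i) / ∑ j, Real.exp (u j)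

/-- `‖Mᵀ‖_{2,∞}`: the maximum Euclidean norm of the rows of `M`. -/
noncomputable def maxRowEuclideanNorm {L d : ℕ} (M : Matrix (Fin L) (Fin d) ℝ) : ℝ :=
  ⨆ i : Fin L, Real.sqrt (∑ j, (M i j) ^ 2)

/-- `‖Aᵀ‖_{1,2} = (Σ_i ‖A_{i,:}‖₁²)^{1/2}`, the `(1,2)`-mixed norm of the transpose. -/
noncomputable def rowOneTwoNorm {d dy : ℕ} (A : Matrix (Fin d) (Fin dy) ℝ) : ℝ :=
  Real.sqrt (∑ i, (∑ j, |A i j|) ^ 2)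

/-- The readout logits `(1/(Lτ)) 𝟙_Lᵀ X A ∈ ℝ^{d_y}`. -/
noncomputable def readoutLogits {L d dy : ℕ} (τ : ℝ) (X : Matrix (Fin L) (Fin d) ℝ)
    (A : Matrix (Fin d) (Fin dy) ℝ) : Fin dy → ℝ :=
  fun j => (1 / ((L : ℝ) * τ)) * ∑ i, ∑ k, X i k * A k j


private lemma expsum_pos {n : ℕ} (hn : 0 < n) (u : Fin n → ℝ) :
    0 < ∑ k, Real.exp (u k) :=
  Finset.sum_pos (fun k _ => Real.exp_pos _)
    (by simp [Finset.univ_nonempty_iff, Fin.pos_iff_nonempty.mp hn])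

private lemma softmax_sum {n : ℕ} (hn : 0 < n) (u : Fin n → ℝ) :
    ∑ j, softmaxVec u j = 1 := by
  simp only [softmaxVec, ← Finset.sum_div]
  exact div_self (expsum_pos hn u).ne'

private lemma softmax_ratio {n : ℕ} (hn : 0 < n) (u v : Fin n → ℝ) (ε : ℝ)
    (h : ∀ j, |u j - v j| ≤ ε) (j : Fin n) :
    Real.exp (-(2 * ε)) * softmaxVec u j ≤ softmaxVec v j := by
  have hS := expsum_pos hn u
  have hT := expsum_pos hn v
  have hTS : (∑ k, Real.exp (v k)) ≤ Real.exp ε * ∑ k, Real.exp (u k) := by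
    rw [Finset.mul_sum]
    refine Finset.sum_le_sum fun k _ => ?_
    rw [← Real.exp_add]
    exact Real.exp_le_exp.mpr (by have := abs_le.mp (h k); linarith [this.2])
  have h1 : Real.exp (u j - ε) ≤ Real.exp (v j) :=
    Real.exp_le_exp.mpr (by have := abs_le.mp (h j); linarith [this.1])
  calc Real.exp (-(2 * ε)) * softmaxVec u j
      = Real.exp (u j - ε) / (Real.exp ε * ∑ k, Real.exp (u k)) := by
        unfold softmaxVec
        rw [div_mul_eq_div_div, ← Real.exp_sub, ← mul_div_assoc, ← Real.exp_add]
        ring_nf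
    _ ≤ Real.exp (v j) / (Real.exp ε * ∑ k, Real.exp (u k)) := by gcongr
    _ ≤ softmaxVec v j := by
        unfold softmaxVec
        gcongr

private lemma softmax_tv {n : ℕ} (u v : Fin n → ℝ) (ε : ℝ) (hε : 0 ≤ ε)
    (h : ∀ j, |u j - v j| ≤ ε) :
    ∑ j, |softmaxVec u j - softmaxVec v j| ≤ 4 * ε := by
  rcases Nat.eq_zero_or_pos n with hn | hn
  · subst hn; simp; positivity
  have hone : 0 ≤ 1 - Real.exp (-(2 * ε)) := by
    have := Real.exp_le_one_iff.mpr (by linarith : -(2*ε) ≤ 0)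
    linarith
  have hpt : ∀ j, |softmaxVec u j - softmaxVec v j|
      ≤ (softmaxVec u j + softmaxVec v j) * (1 - Real.exp (-(2 * ε))) := by
    intro j
    have hpu : 0 ≤ softmaxVec u j := by
      unfold softmaxVec; positivity
    have hpv : 0 ≤ softmaxVec v j := by
      unfold softmaxVec; positivity
    have r1 := softmax_ratio hn u v ε h j
    have r2 := softmax_ratio hn v u ε (fun j => by rw [abs_sub_comm]; exact h j) j
    rw [abs_le]
    constructor
    · nlinarith
    · nlinarith
  calc ∑ j, |softmaxVec u j - softmaxVec v j|
      ≤ ∑ j, (softmaxVec u j + softmaxVec v j) * (1 - Real.exp (-(2 * ε))) :=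
        Finset.sum_le_sum fun j _ => hpt j
    _ = 2 * (1 - Real.exp (-(2 * ε))) := by
        rw [← Finset.sum_mul, Finset.sum_add_distrib, softmax_sum hn, softmax_sum hn]
        ring
    _ ≤ 4 * ε := by
        have := Real.add_one_le_exp (-(2 * ε))
        linarith

/- **Final-layer total variation bound** (first step in the proof of Proposition F.1):
if every row of `X, X̃ ∈ ℝ^{L×d}` has Euclidean norm at most `1`, then the softmax
readout distributions `P = softmax(𝟙ᵀXA/(Lτ))` and `P̃ = softmax(𝟙ᵀX̃Ã/(Lτ))` satisfy
`TV(P,P̃) ≤ (2/τ)(‖Aᵀ‖_{1,2} ‖Xᵀ − X̃ᵀ‖_{2,∞} + ‖Aᵀ − Ãᵀ‖_{1,2})`. -/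
theorem final_layer_tv_bound
    {L d dy : ℕ} (hL : 1 ≤ L)
    (τ : ℝ) (hτ0 : 0 < τ) (hτ1 : τ ≤ 1)
    (X X' : Matrix (Fin L) (Fin d) ℝ)
    (hX : ∀ i, Real.sqrt (∑ j, (X i j) ^ 2) ≤ 1)
    (hX' : ∀ i, Real.sqrt (∑ j, (X' i j) ^ 2) ≤ 1)
    (A A' : Matrix (Fin d) (Fin dy) ℝ) :
    (1 / 2) * ∑ j, |softmaxVec (readoutLogits τ X A) j
        - softmaxVec (readoutLogits τ X' A') j|
      ≤ (2 / τ) * (rowOneTwoNorm A * maxRowEuclideanNorm (X - X')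
          + rowOneTwoNorm (A - A')) := by

  set M := maxRowEuclideanNorm (X - X') with hM
  set C := rowOneTwoNorm A * M + rowOneTwoNorm (A - A') with hC
  have hM0 : 0 ≤ M := Real.iSup_nonneg fun i => Real.sqrt_nonneg _
  have hC0 : 0 ≤ C := by
    have := Real.sqrt_nonneg (∑ i, (∑ j, |A i j|) ^ 2)
    have := Real.sqrt_nonneg (∑ i, (∑ j, |(A - A') i j|) ^ 2)
    unfold C
    unfold rowOneTwoNorm
    positivity
  have hLpos : (0:ℝ) < (L:ℝ) := by exact_mod_cast hL
  have colA : ∀ j, Real.sqrt (∑ k, (A k j) ^ 2) ≤ rowOneTwoNorm A := by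
    intro j
    apply Real.sqrt_le_sqrt
    refine Finset.sum_le_sum fun k _ => ?_
    rw [← sq_abs]
    have h1 : |A k j| ≤ ∑ j', |A k j'| :=
      Finset.single_le_sum (f := fun j' => |A k j'|) (fun _ _ => abs_nonneg _)
        (Finset.mem_univ j)
    exact pow_le_pow_left₀ (abs_nonneg _) h1 2
  have colA' : ∀ j, Real.sqrt (∑ k, ((A - A') k j) ^ 2) ≤ rowOneTwoNorm (A - A') := by
    intro j
    apply Real.sqrt_le_sqrt
    refine Finset.sum_le_sum fun k _ => ?_
    rw [← sq_abs]
    have h1 : |(A - A') k j| ≤ ∑ j', |(A - A') k j'| :=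
      Finset.single_le_sum (f := fun j' => |(A - A') k j'|) (fun _ _ => abs_nonneg _)
        (Finset.mem_univ j)
    exact pow_le_pow_left₀ (abs_nonneg _) h1 2
  have rowX : ∀ i, Real.sqrt (∑ k, (X i k - X' i k) ^ 2) ≤ M := by
    intro i
    have hb : BddAbove (Set.range fun i => Real.sqrt (∑ j, ((X - X') i j) ^ 2)) :=
      Set.Finite.bddAbove (Set.finite_range _)
    have := le_ciSup hb i
    simpa [hM, maxRowEuclideanNorm, Matrix.sub_apply] using this
  have key : ∀ j, |readoutLogits τ X A j - readoutLogits τ X' A' j| ≤ (1 / τ) * C := by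
    intro j
    have hdiff : readoutLogits τ X A j - readoutLogits τ X' A' j
        = (1 / ((L:ℝ) * τ)) *
          ∑ i, ((∑ k, (X i k - X' i k) * A k j) + ∑ k, X' i k * ((A - A') k j)) := by
      unfold readoutLogits
      rw [← mul_sub]
      congr 1
      rw [← Finset.sum_sub_distrib]
      refine Finset.sum_congr rfl fun i _ => ?_
      rw [← Finset.sum_sub_distrib, ← Finset.sum_add_distrib]
      refine Finset.sum_congr rfl fun k _ => ?_
      simp [Matrix.sub_apply]
      ring
    rw [hdiff, abs_mul]
    have hterm : ∀ i : Fin L,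
        |(∑ k, (X i k - X' i k) * A k j) + ∑ k, X' i k * ((A - A') k j)| ≤ C := by
      intro i
      refine (abs_add_le _ _).trans ?_
      have t1 : |∑ k, (X i k - X' i k) * A k j|
          ≤ Real.sqrt (∑ k, (X i k - X' i k) ^ 2) * Real.sqrt (∑ k, (A k j) ^ 2) :=
        cs_abs _ _
      have t2 : |∑ k, X' i k * ((A - A') k j)|
          ≤ Real.sqrt (∑ k, (X' i k) ^ 2) * Real.sqrt (∑ k, ((A - A') k j) ^ 2) :=
        cs_abs _ _
      have b1 : Real.sqrt (∑ k, (X i k - X' i k) ^ 2) * Real.sqrt (∑ k, (A k j) ^ 2)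
          ≤ M * rowOneTwoNorm A := by
        apply mul_le_mul (rowX i) (colA j) (Real.sqrt_nonneg _) hM0
      have b2 : Real.sqrt (∑ k, (X' i k) ^ 2) * Real.sqrt (∑ k, ((A - A') k j) ^ 2)
          ≤ 1 * rowOneTwoNorm (A - A') := by
        apply mul_le_mul (hX' i) (colA' j) (Real.sqrt_nonneg _) zero_le_one
      unfold C
      nlinarith [mul_comm M (rowOneTwoNorm A)]
    have hsum : |∑ i, ((∑ k, (X i k - X' i k) * A k j) + ∑ k, X' i k * ((A - A') k j))|
        ≤ (L:ℝ) * C := by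
      refine (Finset.abs_sum_le_sum_abs _ _).trans ?_
      calc ∑ i, |(∑ k, (X i k - X' i k) * A k j) + ∑ k, X' i k * ((A - A') k j)|
          ≤ ∑ _i : Fin L, C := Finset.sum_le_sum fun i _ => hterm i
        _ = (L:ℝ) * C := by simp [mul_comm]
    have habs : |1 / ((L:ℝ) * τ)| = 1 / ((L:ℝ) * τ) := by
      rw [abs_of_pos]; positivity
    rw [habs]
    calc (1 / ((L:ℝ) * τ)) * |∑ i, ((∑ k, (X i k - X' i k) * A k j) + ∑ k, X' i k * ((A - A') k j))|
        ≤ (1 / ((L:ℝ) * τ)) * ((L:ℝ) * C) := by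
          apply mul_le_mul_of_nonneg_left hsum
          positivity
      _ = (1 / τ) * C := by
          field_simp
  have hε0 : 0 ≤ (1 / τ) * C := by positivity
  have htv := softmax_tv (readoutLogits τ X A) (readoutLogits τ X' A') ((1 / τ) * C) hε0 key
  calc (1 / 2) * ∑ j, |softmaxVec (readoutLogits τ X A) j
        - softmaxVec (readoutLogits τ X' A') j|
      ≤ (1 / 2) * (4 * ((1 / τ) * C)) := by linarith
    _ = (2 / τ) * C := by ring
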